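/- Let P be a finite Γ-colored poset satisfying EC and ND, fix m ≥ 1 and a linear extension of P. For each m-flag of order ideals, the associated m-stackwise vector, when expanded in the basis of m-multisets of ideals, has as its unique gravity-minimal (leading) term the m-multiset {I₁, ..., I_m} formed by the flag itself. Consequently, distinct m-flags yield m-stackwise vectors with distinct leading terms, and the collection of all m-stackwise vectors (over all m-flags) is linearly independent. -/

import Mathlib

open scoped Classical

/-- The set of ideals obtainable from the ideal `I` by adding a minimal element of the
complementary filter of color `a`. -/
noncomputable def addSet {P Γ : Type} [Fintype P] [PartialOrder P] [DecidableEq P]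
    (κ : P → Γ) (a : Γ) (I : Finset P) : Finset (Finset P) :=
  (Finset.univ.filter (fun x : P => κ x = a ∧ x ∉ I ∧
    IsLowerSet ((insert x I : Finset P) : Set P))).image (fun x => insert x I)

/-- The raising operator `X_a` on a single `m`-multiset of ideals: replace one
occurrence of an ideal `I` of the multiset by `X_a·I`, summed over all positions. -/
noncomputable def XaM {P Γ : Type} [Fintype P] [PartialOrder P] [DecidableEq P]
    (κ : P → Γ) (a : Γ) (M : Multiset (Finset P)) : Multiset (Finset P) →₀ ℚ :=
  (M.map (fun I =>
    ((addSet κ a I).val.map (fun J => Finsupp.single (M.erase I + {J}) (1 : ℚ))).sum)).sum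

/-- The linear extension of `X_a` to formal `ℚ`-linear combinations of multisets. -/
noncomputable def Xv {P Γ : Type} [Fintype P] [PartialOrder P] [DecidableEq P]
    (κ : P → Γ) (a : Γ) (v : Multiset (Finset P) →₀ ℚ) : Multiset (Finset P) →₀ ℚ :=
  v.sum (fun M c => c • XaM κ a M)

/-- The divided power operator `⟨a^k⟩ = X_a^k / k!`. -/
noncomputable def opPow {P Γ : Type} [Fintype P] [PartialOrder P] [DecidableEq P]
    (κ : P → Γ) (a : Γ) (k : ℕ) (v : Multiset (Finset P) →₀ ℚ) : Multiset (Finset P) →₀ ℚ :=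
  ((k.factorial : ℚ)⁻¹) • (Xv κ a)^[k] v

/-- The `m`-stackwise vector `⟨a_p^{ψ(x_p)}, …, a_1^{ψ(x_1)}⟩·{∅,…,∅}` of the
`m`-flag `I`, where `ψ(x) = #{i : x ∈ I_i}` and the operators are composed right to
left starting with the color group of `x₁`. -/
noncomputable def stackVec {P Γ : Type} [Fintype P] [PartialOrder P] [DecidableEq P]
    (κ : P → Γ) {p : ℕ} (ℓ : P ≃ Fin p) (m : ℕ) (I : Fin m → Finset P) :
    Multiset (Finset P) →₀ ℚ :=
  (List.ofFn (fun j : Fin p =>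
    (κ (ℓ.symm j), (Finset.univ.filter (fun i : Fin m => ℓ.symm j ∈ I i)).card))).foldl
    (fun v pr => opPow κ pr.1 pr.2 v) (Finsupp.single (Multiset.replicate m (∅ : Finset P)) 1)

/-- The `m`-multiset of ideals underlying the `m`-flag `I`. -/
def flagMultiset {P : Type} {m : ℕ} (I : Fin m → Finset P) : Multiset (Finset P) :=
  ↑(List.ofFn I)

/-- The gravity-order key of an ideal: ideals with more elements are smaller, ties
broken lexicographically on the sorted list of positions in the linear extension. -/
noncomputable def idealKey {P : Type} [DecidableEq P] {p : ℕ} (ℓ : P ≃ Fin p)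
    (I : Finset P) : ℕ ×ₗ List (Fin p) :=
  toLex (p - I.card, Finset.sort (I.image ℓ) (· ≤ ·))

/-- The gravity order on `m`-multisets of ideals: compare total cardinality first
(larger total is smaller), then lexicographically on the gravity-sorted lists of
ideals (via their gravity keys). -/
noncomputable def gravityM {P : Type} [DecidableEq P] {p : ℕ} (ℓ : P ≃ Fin p)
    (M N : Multiset (Finset P)) : Prop :=
  (N.map Finset.card).sum < (M.map Finset.card).sum ∨
  ((M.map Finset.card).sum = (N.map Finset.card).sum ∧
    List.Lex (· < ·) ((M.map (idealKey ℓ)).sort (· ≤ ·)) ((N.map (idealKey ℓ)).sort (· ≤ ·)))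

namespace Stmt12Aux

open Finset

variable {P Γ : Type} [Fintype P] [PartialOrder P] [DecidableEq P]

/-- number of ideals of `M` containing `z` -/
noncomputable def cnt (M : Multiset (Finset P)) (z : P) : ℕ := M.countP (fun J => z ∈ J)

/-- the flag (nested multiset of ideals) associated to a profile `φ` -/
noncomputable def flagOf (φ : P → ℕ) (m : ℕ) : Multiset (Finset P) :=
  ↑(List.ofFn (fun i : Fin m => univ.filter (fun x => (i : ℕ) < φ x)))

variable {p : ℕ} (ℓ : P ≃ Fin p) (κ : P → Γ)

noncomputable def sortKeys (M : Multiset (Finset P)) : List (ℕ ×ₗ List (Fin p)) :=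
  (M.map (idealKey ℓ)).sort (· ≤ ·)

noncomputable def Zx (x : P) : Finset P := univ.filter (fun z => κ z = κ x ∧ x ≤ z)

def Dom (φ : P → ℕ) (M : Multiset (Finset P)) : Prop :=
  ∀ x : P, ∑ z ∈ Zx κ x, cnt M z ≤ ∑ z ∈ Zx κ x, φ z

include ℓ in
lemma card_le_p (J : Finset P) : J.card ≤ p := by
  have h1 : J.card ≤ Fintype.card P := Finset.card_le_univ J
  have h2 : Fintype.card P = p := by
    rw [Fintype.card_congr ℓ, Fintype.card_fin]
  omega

lemma key_lt_of_card_lt {J F : Finset P} (h : J.card < F.card) :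
    idealKey ℓ F < idealKey ℓ J := by
  have hF := card_le_p ℓ F
  rw [idealKey, idealKey, Prod.Lex.lt_iff]
  left
  show p - F.card < p - J.card
  omega

lemma key_le_of_subset {J F : Finset P} (h : J ⊆ F) :
    idealKey ℓ F ≤ idealKey ℓ J := by
  rcases lt_or_eq_of_le (Finset.card_le_card h) with hlt | heq
  · exact le_of_lt (key_lt_of_card_lt ℓ hlt)
  · rw [Finset.eq_of_subset_of_card_le h (le_of_eq heq.symm)]

lemma sortKeys_cons {F : Finset P} {M : Multiset (Finset P)}
    (h : ∀ J ∈ M, idealKey ℓ F ≤ idealKey ℓ J) :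
    sortKeys ℓ (F ::ₘ M) = idealKey ℓ F :: sortKeys ℓ M := by
  rw [sortKeys, Multiset.map_cons, Multiset.sort_cons]
  · rfl
  · intro b hb
    obtain ⟨J, hJ, rfl⟩ := Multiset.mem_map.mp hb
    exact h J hJ

lemma flagOf_zero (φ : P → ℕ) : flagOf φ 0 = 0 := by simp [flagOf]

lemma flagOf_succ (φ : P → ℕ) (m : ℕ) :
    flagOf φ (m+1) = (univ.filter (fun x => 0 < φ x)) ::ₘ flagOf (fun x => φ x - 1) m := by
  have htail : (List.ofFn fun i : Fin m => filter (fun x => (↑(i.succ) : ℕ) < φ x) univ) =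
      List.ofFn fun i : Fin m => filter (fun x => (↑i : ℕ) < φ x - 1) univ := by
    congr 1
    funext i
    ext x
    simp only [mem_filter, mem_univ, true_and, Fin.val_succ]
    omega
  rw [flagOf, List.ofFn_succ, htail, ← Multiset.cons_coe]
  rw [show flagOf (fun x => φ x - 1) m
      = ↑(List.ofFn fun i : Fin m => filter (fun x => (↑i : ℕ) < φ x - 1) univ) from rfl]
  congr 1

lemma mem_flagOf {φ : P → ℕ} {m : ℕ} {J : Finset P} (h : J ∈ flagOf φ m) :
    ∃ i : Fin m, J = univ.filter (fun x => (i : ℕ) < φ x) := by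
  rw [flagOf, Multiset.mem_coe, List.mem_ofFn] at h
  obtain ⟨i, rfl⟩ := h
  exact ⟨i, rfl⟩

/-- The static gravity-minimality lemma. -/
theorem staticMin (m : ℕ) (φ : P → ℕ) (hφ : ∀ ⦃x y : P⦄, x ≤ y → φ y ≤ φ x)
    (M : Multiset (Finset P)) (hcard : Multiset.card M = m)
    (hdom : Dom κ φ M) :
    M = flagOf φ m ∨ List.Lex (· < ·) (sortKeys ℓ (flagOf φ m)) (sortKeys ℓ M) := by
  induction m generalizing φ M with
  | zero =>
    left
    rw [Multiset.card_eq_zero] at hcard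
    rw [hcard, flagOf_zero]
  | succ m ih =>
    set F₀ : Finset P := univ.filter (fun x => 0 < φ x) with hF₀def
    have hsub : ∀ J ∈ M, J ⊆ F₀ := by
      intro J hJ x hx
      have h1 : 0 < cnt M x := Multiset.countP_pos.mpr ⟨J, hJ, hx⟩
      have hxZ : x ∈ Zx κ x := by simp [Zx]
      have h2 : cnt M x ≤ ∑ z ∈ Zx κ x, cnt M z :=
        Finset.single_le_sum (fun z _ => Nat.zero_le _) hxZ
      have h3 : 0 < ∑ z ∈ Zx κ x, φ z := lt_of_lt_of_le (lt_of_lt_of_le h1 h2) (hdom x)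
      obtain ⟨z, hz, hz1⟩ : ∃ z ∈ Zx κ x, 0 < φ z := by
        by_contra hc
        push_neg at hc
        have : ∑ z ∈ Zx κ x, φ z = 0 := Finset.sum_eq_zero (fun z hz => by
          have := hc z hz; omega)
        omega
      have hxz : x ≤ z := (mem_filter.mp hz).2.2
      exact mem_filter.mpr ⟨mem_univ _, lt_of_lt_of_le hz1 (hφ hxz)⟩
    -- key of F₀ is ≤ keys of members of M and of flag tails
    by_cases hF : F₀ ∈ M
    · -- peel off F₀
      set M' := M.erase F₀ with hM'def
      have hMeq : M = F₀ ::ₘ M' := (Multiset.cons_erase hF).symm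
      have hcard' : Multiset.card M' = m := by
        have := congrArg Multiset.card hMeq
        rw [Multiset.card_cons] at this
        omega
      have hφ' : ∀ ⦃x y : P⦄, x ≤ y → (fun x => φ x - 1) y ≤ (fun x => φ x - 1) x := by
        intro x y h
        simp only
        have := hφ h
        omega
      have hdom' : Dom κ (fun x => φ x - 1) M' := by
        intro x
        have h := hdom x
        have hcnt : ∀ z, cnt M z = cnt M' z + (if z ∈ F₀ then 1 else 0) := by
          intro z
          rw [cnt, cnt]
          conv_lhs => rw [hMeq]
          rw [Multiset.countP_cons]
        have hφeq : ∀ z, φ z = (φ z - 1) + (if z ∈ F₀ then 1 else 0) := by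
          intro z
          by_cases hz : z ∈ F₀
          · have : 0 < φ z := (mem_filter.mp hz).2
            rw [if_pos hz]; omega
          · have : ¬ 0 < φ z := fun hc => hz (mem_filter.mpr ⟨mem_univ _, hc⟩)
            rw [if_neg hz]; omega
        have e1 : ∑ z ∈ Zx κ x, cnt M z
            = ∑ z ∈ Zx κ x, cnt M' z + ∑ z ∈ Zx κ x, (if z ∈ F₀ then 1 else 0) := by
          rw [Finset.sum_congr rfl (fun z _ => hcnt z), Finset.sum_add_distrib]
        have e2 : ∑ z ∈ Zx κ x, φ z
            = ∑ z ∈ Zx κ x, (φ z - 1) + ∑ z ∈ Zx κ x, (if z ∈ F₀ then 1 else 0) := by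
          rw [Finset.sum_congr rfl (fun z _ => hφeq z), Finset.sum_add_distrib]
        simp only []
        omega
      have hflag : flagOf φ (m+1) = F₀ ::ₘ flagOf (fun x => φ x - 1) m := flagOf_succ φ m
      rcases ih (fun x => φ x - 1) hφ' M' hcard' hdom' with heq | hlex
      · left; rw [hMeq, heq, hflag]
      · right
        have htail : ∀ J ∈ flagOf (fun x => φ x - 1) m, idealKey ℓ F₀ ≤ idealKey ℓ J := by
          intro J hJ
          obtain ⟨i, rfl⟩ := mem_flagOf hJ
          apply key_le_of_subset
          intro x hx
          have := (mem_filter.mp hx).2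
          exact mem_filter.mpr ⟨mem_univ _, by omega⟩
        have hMtail : ∀ J ∈ M', idealKey ℓ F₀ ≤ idealKey ℓ J := by
          intro J hJ
          exact key_le_of_subset ℓ (hsub J (Multiset.mem_of_mem_erase hJ))
        rw [hflag, sortKeys_cons ℓ htail, hMeq, sortKeys_cons ℓ hMtail]
        exact List.Lex.cons hlex
    · -- F₀ not in M : strict card drop
      right
      have hkeys : ∀ J ∈ M, idealKey ℓ F₀ < idealKey ℓ J := by
        intro J hJ
        apply key_lt_of_card_lt
        apply Finset.card_lt_card
        exact HasSubset.Subset.ssubset_of_ne (hsub J hJ) (fun h => hF (h ▸ hJ))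
      have hflag : flagOf φ (m+1) = F₀ ::ₘ flagOf (fun x => φ x - 1) m := flagOf_succ φ m
      have htail : ∀ J ∈ flagOf (fun x => φ x - 1) m, idealKey ℓ F₀ ≤ idealKey ℓ J := by
        intro J hJ
        obtain ⟨i, rfl⟩ := mem_flagOf hJ
        apply key_le_of_subset
        intro x hx
        have := (mem_filter.mp hx).2
        exact mem_filter.mpr ⟨mem_univ _, by omega⟩
      rw [hflag, sortKeys_cons ℓ htail]
      -- sortKeys M is nonempty
      have hlen : (sortKeys ℓ M).length = m + 1 := by
        rw [sortKeys, Multiset.length_sort, Multiset.card_map, hcard]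
      cases hsk : sortKeys ℓ M with
      | nil => rw [hsk] at hlen; simp at hlen
      | cons h t =>
        have hmem : h ∈ M.map (idealKey ℓ) := by
          rw [← Multiset.mem_sort (· ≤ ·)]
          rw [sortKeys] at hsk
          rw [hsk]
          exact List.mem_cons_self
        obtain ⟨J, hJ, rfl⟩ := Multiset.mem_map.mp hmem
        exact List.Lex.rel (hkeys J hJ)


set_option maxHeartbeats 1000000

lemma msum_apply (S : Multiset (Multiset (Finset P) →₀ ℚ)) (N : Multiset (Finset P)) :
    S.sum N = (S.map (fun f => f N)).sum := by
  induction S using Multiset.induction with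
  | empty => simp
  | cons a s ih => simp [ih]

lemma XaM_apply (a : Γ) (M N : Multiset (Finset P)) :
    XaM κ a M N = (M.map (fun I =>
      ((addSet κ a I).val.map (fun J => if M.erase I + {J} = N then (1:ℚ) else 0)).sum)).sum := by
  rw [XaM, msum_apply, Multiset.map_map]
  congr 1
  apply Multiset.map_congr rfl
  intro I hI
  rw [Function.comp_apply, msum_apply, Multiset.map_map]
  congr 1
  apply Multiset.map_congr rfl
  intro J hJ
  rw [Function.comp_apply, Finsupp.single_apply]

lemma XaM_apply_nonneg (a : Γ) (M N : Multiset (Finset P)) : 0 ≤ XaM κ a M N := by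
  rw [XaM_apply]
  apply Multiset.sum_nonneg
  intro q hq
  obtain ⟨I, hI, rfl⟩ := Multiset.mem_map.mp hq
  apply Multiset.sum_nonneg
  intro r hr
  obtain ⟨J, hJ, rfl⟩ := Multiset.mem_map.mp hr
  split_ifs <;> norm_num

lemma exists_ne_zero_of_sum_ne_zero {S : Multiset ℚ} (h : S.sum ≠ 0) : ∃ q ∈ S, q ≠ 0 := by
  by_contra hc
  push_neg at hc
  exact h (Multiset.sum_eq_zero hc)

lemma XaM_ne_zero {a : Γ} {M N : Multiset (Finset P)} (h : XaM κ a M N ≠ 0) :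
    ∃ J ∈ M, ∃ y : P, κ y = a ∧ y ∉ J ∧ IsLowerSet ((insert y J : Finset P) : Set P) ∧
      N = M.erase J + {insert y J} := by
  rw [XaM_apply] at h
  obtain ⟨q, hq, hq0⟩ := exists_ne_zero_of_sum_ne_zero h
  obtain ⟨I, hI, rfl⟩ := Multiset.mem_map.mp hq
  obtain ⟨r, hr, hr0⟩ := exists_ne_zero_of_sum_ne_zero hq0
  obtain ⟨J', hJ', rfl⟩ := Multiset.mem_map.mp hr
  have hcond : M.erase I + {J'} = N := by
    by_contra hc
    rw [if_neg hc] at hr0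
    exact hr0 rfl
  rw [Finset.mem_val] at hJ'
  rw [addSet, Finset.mem_image] at hJ'
  obtain ⟨y, hy, rfl⟩ := hJ'
  rw [Finset.mem_filter] at hy
  exact ⟨I, hI, y, hy.2.1, hy.2.2.1, hy.2.2.2, hcond.symm⟩

lemma one_le_XaM {a : Γ} {M : Multiset (Finset P)} {J : Finset P} (hJ : J ∈ M)
    {y : P} (hy : κ y = a) (hyJ : y ∉ J)
    (hins : IsLowerSet ((insert y J : Finset P) : Set P)) :
    (1:ℚ) ≤ XaM κ a M (M.erase J + {insert y J}) := by
  have hmemAdd : insert y J ∈ (addSet κ a J).val := by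
    rw [Finset.mem_val, addSet, Finset.mem_image]
    exact ⟨y, Finset.mem_filter.mpr ⟨Finset.mem_univ _, hy, hyJ, hins⟩, rfl⟩
  obtain ⟨E, hE⟩ : ∃ E, M.erase J = E := ⟨_, rfl⟩
  have hM : M = J ::ₘ E := by rw [← hE, Multiset.cons_erase hJ]
  rw [hM, Multiset.erase_cons_head]
  rw [XaM_apply, Multiset.map_cons, Multiset.sum_cons]
  have h2 : 0 ≤ (Multiset.map (fun I =>
      ((addSet κ a I).val.map (fun J' => if (J ::ₘ E).erase I + {J'} = E + {insert y J} then (1:ℚ) else 0)).sum) E).sum := by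
    apply Multiset.sum_nonneg
    intro q hq
    obtain ⟨I, hI, rfl⟩ := Multiset.mem_map.mp hq
    apply Multiset.sum_nonneg
    intro r hr
    obtain ⟨J', hJ', rfl⟩ := Multiset.mem_map.mp hr
    split_ifs <;> norm_num
  have h1 : (1:ℚ) ≤ ((addSet κ a J).val.map
      (fun J' => if (J ::ₘ E).erase J + {J'} = E + {insert y J} then (1:ℚ) else 0)).sum := by
    have hmem1 : (1:ℚ) ∈ (addSet κ a J).val.map
        (fun J' => if (J ::ₘ E).erase J + {J'} = E + {insert y J} then (1:ℚ) else 0) := by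
      apply Multiset.mem_map.mpr
      refine ⟨insert y J, hmemAdd, ?_⟩
      rw [if_pos]
      rw [Multiset.erase_cons_head]
    apply Multiset.single_le_sum _ _ hmem1
    intro r hr
    obtain ⟨J', hJ', rfl⟩ := Multiset.mem_map.mp hr
    split_ifs <;> norm_num
  exact le_add_of_le_of_nonneg h1 h2

lemma Xv_apply (a : Γ) (v : Multiset (Finset P) →₀ ℚ) (N : Multiset (Finset P)) :
    (Xv κ a v) N = v.sum (fun M c => c * XaM κ a M N) := by
  rw [Xv, Finsupp.sum_apply]
  simp only [Finsupp.smul_apply, smul_eq_mul]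

lemma Xv_nonneg {a : Γ} {v : Multiset (Finset P) →₀ ℚ} (h : ∀ N, 0 ≤ v N) (N : Multiset (Finset P)) :
    0 ≤ Xv κ a v N := by
  rw [Xv_apply, Finsupp.sum]
  apply Finset.sum_nonneg
  intro M _
  exact mul_nonneg (h M) (XaM_apply_nonneg κ a M N)

lemma Xv_ne_zero {a : Γ} {v : Multiset (Finset P) →₀ ℚ} {N : Multiset (Finset P)}
    (h : Xv κ a v N ≠ 0) : ∃ M, v M ≠ 0 ∧ XaM κ a M N ≠ 0 := by
  by_contra hc
  push_neg at hc
  apply h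
  rw [Xv_apply, Finsupp.sum]
  apply Finset.sum_eq_zero
  intro M hM
  rw [hc M (Finsupp.mem_support_iff.mp hM), mul_zero]

lemma Xv_lower (a : Γ) {v : Multiset (Finset P) →₀ ℚ} (h0 : ∀ N, 0 ≤ v N)
    {M₀ : Multiset (Finset P)} (hM₀ : M₀ ∈ v.support) (N : Multiset (Finset P)) :
    v M₀ * XaM κ a M₀ N ≤ Xv κ a v N := by
  rw [Xv_apply, Finsupp.sum]
  exact Finset.single_le_sum
    (f := fun M => v M * XaM κ a M N)
    (fun M _ => mul_nonneg (h0 M) (XaM_apply_nonneg κ a M N)) hM₀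

def Good (φ : P → ℕ) (m : ℕ) (M : Multiset (Finset P)) : Prop :=
  Multiset.card M = m ∧ (∀ J ∈ M, IsLowerSet ((J : Finset P) : Set P)) ∧
    (M.map Finset.card).sum = ∑ x : P, φ x ∧ Dom κ φ M

lemma strictℓ {p : ℕ} (ℓ : P ≃ Fin p) (hℓ : ∀ x y : P, x ≤ y → ℓ x ≤ ℓ y)
    {x y : P} (h : x < y) : (ℓ x : ℕ) < (ℓ y : ℕ) := by
  have h1 : ℓ x ≤ ℓ y := hℓ x y (le_of_lt h)
  have h2 : ℓ x ≠ ℓ y := fun e => (ne_of_lt h) (ℓ.injective e)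
  have h3 : ℓ x < ℓ y := lt_of_le_of_ne h1 h2
  exact h3

theorem stepGood {p : ℕ} (ℓ : P ≃ Fin p)
    (hEC : ∀ x y : P, κ x = κ y → x ≤ y ∨ y ≤ x)
    (hND : ∀ x y : P, x ⋖ y → κ x ≠ κ y)
    (hℓ : ∀ x y : P, x ≤ y → ℓ x ≤ ℓ y)
    {j : ℕ} {x₀ : P} (hx₀ : (ℓ x₀ : ℕ) = j)
    {φ : P → ℕ} (hφ0 : ∀ z : P, φ z ≠ 0 → (ℓ z : ℕ) ≤ j)
    {m : ℕ} {M N : Multiset (Finset P)} (hG : Good κ φ m M)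
    {J : Finset P} (hJ : J ∈ M) {y : P} (hy : κ y = κ x₀) (hyJ : y ∉ J)
    (hins : IsLowerSet ((insert y J : Finset P) : Set P))
    (hN : N = M.erase J + {insert y J}) :
    Good κ (fun z => φ z + if z = x₀ then 1 else 0) m N := by
  obtain ⟨hc, hl, hs, hd⟩ := hG
  -- the crucial geometric fact : y ≤ x₀
  have hyx : y ≤ x₀ := by
    rcases hEC y x₀ (by rw [hy]) with h | h
    · exact h
    · by_contra hne
      have hlt : x₀ < y := lt_of_le_of_ne h (fun e => hne (le_of_eq e.symm))
      obtain ⟨z, hcov, hzy⟩ := hlt.exists_covby_le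
      have hzny : z ≠ y := by
        rintro rfl
        exact hND x₀ z hcov hy.symm
      have hzJ : z ∈ J := by
        have hz' : z ∈ ((insert y J : Finset P) : Set P) :=
          hins (le_of_lt (lt_of_le_of_ne hzy hzny)) (by simp)
        simp only [Finset.coe_insert, Set.mem_insert_iff, Finset.mem_coe] at hz'
        tauto
      have h1 : 0 < cnt M z := Multiset.countP_pos.mpr ⟨J, hJ, hzJ⟩
      have h2 : cnt M z ≤ ∑ w ∈ Zx κ z, cnt M w :=
        Finset.single_le_sum (fun _ _ => Nat.zero_le _) (by simp [Zx])
      have h3 : 0 < ∑ w ∈ Zx κ z, φ w := lt_of_lt_of_le (lt_of_lt_of_le h1 h2) (hd z)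
      obtain ⟨w, hw, hw1⟩ : ∃ w ∈ Zx κ z, 0 < φ w := by
        by_contra hcon
        push_neg at hcon
        have : ∑ w ∈ Zx κ z, φ w = 0 := Finset.sum_eq_zero (fun w hw => by
          have := hcon w hw; omega)
        omega
      have hzw : z ≤ w := (Finset.mem_filter.mp hw).2.2
      have hwj : (ℓ w : ℕ) ≤ j := hφ0 w (by omega)
      have h5 : (ℓ x₀ : ℕ) < (ℓ z : ℕ) := strictℓ ℓ hℓ hcov.lt
      have h6 : (ℓ z : ℕ) ≤ (ℓ w : ℕ) := hℓ z w hzw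
      omega
  have hm1 : 0 < Multiset.card M := Multiset.card_pos_iff_exists_mem.mpr ⟨J, hJ⟩
  refine ⟨?_, ?_, ?_, ?_⟩
  · rw [hN, Multiset.card_add, Multiset.card_erase_of_mem hJ, Multiset.card_singleton]
    simp only [Nat.pred_eq_sub_one]
    omega
  · intro K hK
    rw [hN, Multiset.mem_add] at hK
    rcases hK with hK | hK
    · exact hl K (Multiset.mem_of_mem_erase hK)
    · rw [Multiset.mem_singleton] at hK
      rw [hK]
      exact hins
  · show (N.map Finset.card).sum = ∑ x : P, (φ x + if x = x₀ then 1 else 0)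
    have hJcard : (insert y J).card = J.card + 1 := Finset.card_insert_of_notMem hyJ
    have e1 : (N.map Finset.card).sum = ((M.erase J).map Finset.card).sum + (J.card + 1) := by
      rw [hN, Multiset.map_add, Multiset.sum_add]
      simp [hJcard]
    have e2 : (M.map Finset.card).sum = ((M.erase J).map Finset.card).sum + J.card := by
      conv_lhs => rw [← Multiset.cons_erase hJ]
      rw [Multiset.map_cons, Multiset.sum_cons]
      omega
    have e3 : ∑ x : P, (φ x + if x = x₀ then 1 else 0) = (∑ x : P, φ x) + 1 := by
      rw [Finset.sum_add_distrib, Finset.sum_ite_eq' Finset.univ x₀ (fun _ => 1)]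
      simp
    omega
  · intro x
    show ∑ z ∈ Zx κ x, cnt N z ≤ ∑ z ∈ Zx κ x, (φ z + if z = x₀ then 1 else 0)
    have hcnt : ∀ z, cnt N z = cnt M z + (if z = y then 1 else 0) := by
      intro z
      rw [cnt, cnt, hN, Multiset.countP_add]
      conv_rhs => rw [← Multiset.cons_erase hJ]
      rw [Multiset.countP_cons]
      have hsing : Multiset.countP (fun K => z ∈ K) ({insert y J} : Multiset (Finset P))
          = if z ∈ insert y J then 1 else 0 := by
        rw [show ({insert y J} : Multiset (Finset P)) = (insert y J) ::ₘ 0 from rfl,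
          Multiset.countP_cons, Multiset.countP_zero]
        omega
      rw [hsing]
      by_cases hzy : z = y
      · subst hzy
        simp [Finset.mem_insert, hyJ]
      · have hmi : z ∈ insert y J ↔ z ∈ J := by
          simp [Finset.mem_insert, hzy]
        simp only [hmi, hzy, if_false]
        omega
    have e1 : ∑ z ∈ Zx κ x, cnt N z
        = ∑ z ∈ Zx κ x, cnt M z + (if y ∈ Zx κ x then 1 else 0) := by
      rw [Finset.sum_congr rfl (fun z _ => hcnt z), Finset.sum_add_distrib,
        Finset.sum_ite_eq' (Zx κ x) y (fun _ => 1)]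
    have e2 : ∑ z ∈ Zx κ x, (φ z + if z = x₀ then 1 else 0)
        = ∑ z ∈ Zx κ x, φ z + (if x₀ ∈ Zx κ x then 1 else 0) := by
      rw [Finset.sum_add_distrib, Finset.sum_ite_eq' (Zx κ x) x₀ (fun _ => 1)]
    have himp : (if y ∈ Zx κ x then (1:ℕ) else 0) ≤ (if x₀ ∈ Zx κ x then 1 else 0) := by
      split_ifs with h1 h2
      · exact le_refl _
      · exfalso
        apply h2
        obtain ⟨_, hk, hx⟩ := Finset.mem_filter.mp h1
        exact Finset.mem_filter.mpr ⟨Finset.mem_univ _, by rw [← hy]; exact hk, le_trans hx hyx⟩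
      · exact Nat.zero_le _
      · exact le_refl _
    have := hd x
    omega

theorem flagStep {m : ℕ} (φ : P → ℕ) (hφ : ∀ ⦃x y : P⦄, x ≤ y → φ y ≤ φ x)
    (x₀ : P) (t : ℕ) (htm : t < m) (hφx₀ : φ x₀ = t)
    (hbelow : ∀ z : P, z < x₀ → t < φ z) :
    x₀ ∉ Finset.univ.filter (fun x : P => ((⟨t, htm⟩ : Fin m) : ℕ) < φ x) ∧
    IsLowerSet ((insert x₀ (Finset.univ.filter (fun x : P => ((⟨t, htm⟩ : Fin m) : ℕ) < φ x)) : Finset P) : Set P) ∧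
    flagOf (fun z => φ z + if z = x₀ then 1 else 0) m
      = (flagOf φ m).erase (Finset.univ.filter (fun x : P => ((⟨t, htm⟩ : Fin m) : ℕ) < φ x))
        + {insert x₀ (Finset.univ.filter (fun x : P => ((⟨t, htm⟩ : Fin m) : ℕ) < φ x))} := by
  set G : Fin m → Finset P := fun i => Finset.univ.filter (fun x : P => (i : ℕ) < φ x) with hG
  set G' : Fin m → Finset P :=
    fun i => Finset.univ.filter (fun x : P => (i : ℕ) < φ x + if x = x₀ then 1 else 0) with hG'
  set t' : Fin m := ⟨t, htm⟩ with ht'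
  have hnotmem : x₀ ∉ G t' := by
    simp [hG, hφx₀]
    exact le_rfl
  have hlower : IsLowerSet ((insert x₀ (G t') : Finset P) : Set P) := by
    intro a b hba ha
    simp only [Finset.coe_insert, Set.mem_insert_iff, Finset.mem_coe] at ha ⊢
    rcases ha with rfl | ha
    · rcases eq_or_lt_of_le hba with rfl | hlt
      · left; rfl
      · right
        exact Finset.mem_filter.mpr ⟨Finset.mem_univ _, hbelow b hlt⟩
    · right
      have := (Finset.mem_filter.mp ha).2
      exact Finset.mem_filter.mpr ⟨Finset.mem_univ _, lt_of_lt_of_le this (hφ hba)⟩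
  refine ⟨hnotmem, hlower, ?_⟩
  have hmemt : t' ∈ (↑(List.finRange m) : Multiset (Fin m)) := by
    rw [Multiset.mem_coe]
    exact List.mem_finRange t'
  obtain ⟨R, hR⟩ : ∃ R, (↑(List.finRange m) : Multiset (Fin m)).erase t' = R := ⟨_, rfl⟩
  have hsplit : (↑(List.finRange m) : Multiset (Fin m)) = t' ::ₘ R := by
    rw [← hR, Multiset.cons_erase hmemt]
  have hflag1 : flagOf φ m = Multiset.map G (↑(List.finRange m)) := by
    rw [flagOf, List.ofFn_eq_map]
    rfl
  have hflag2 : flagOf (fun z => φ z + if z = x₀ then 1 else 0) m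
      = Multiset.map G' (↑(List.finRange m)) := by
    rw [flagOf, List.ofFn_eq_map]
    rfl
  have hnd : (↑(List.finRange m) : Multiset (Fin m)).Nodup := by
    rw [Multiset.coe_nodup]
    exact List.nodup_finRange m
  have htR : t' ∉ R := by
    rw [hsplit] at hnd
    exact (Multiset.nodup_cons.mp hnd).1
  have hne : ∀ i ∈ R, G' i = G i := by
    intro i hiR
    have hit : (i : ℕ) ≠ t := by
      intro e
      have hieq : i = t' := Fin.ext e
      exact htR (hieq ▸ hiR)
    ext x
    simp only [hG, hG', Finset.mem_filter, Finset.mem_univ, true_and]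
    by_cases hx : x = x₀
    · subst hx
      rw [if_pos rfl, hφx₀]
      omega
    · rw [if_neg hx]
      omega
  have hGt' : G' t' = insert x₀ (G t') := by
    ext x
    simp only [hG, hG', Finset.mem_insert, Finset.mem_filter, Finset.mem_univ, true_and]
    by_cases hx : x = x₀
    · subst hx
      rw [if_pos rfl, hφx₀]
      constructor
      · intro _
        exact Or.inl rfl
      · intro _
        exact Nat.lt_succ_self t
    · rw [if_neg hx]
      constructor
      · intro h
        right
        exact h
      · intro h
        rcases h with h | h
        · exact absurd h hx
        · exact h
  rw [hflag2, hflag1, hsplit, Multiset.map_cons, Multiset.map_cons,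
    Multiset.erase_cons_head, hGt', Multiset.map_congr rfl hne, add_comm,
    Multiset.singleton_add]

noncomputable def φst (ψ : P → ℕ) (j t : ℕ) (x : P) : ℕ :=
  if (ℓ x : ℕ) < j then ψ x else if (ℓ x : ℕ) = j then t else 0

lemma φst_lt {ψ : P → ℕ} {j t : ℕ} {x : P} (h : (ℓ x : ℕ) < j) : φst ℓ ψ j t x = ψ x := by
  rw [φst, if_pos h]

lemma φst_eq {ψ : P → ℕ} {j t : ℕ} {x : P} (h : (ℓ x : ℕ) = j) : φst ℓ ψ j t x = t := by
  rw [φst, if_neg (by omega), if_pos h]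

lemma φst_gt {ψ : P → ℕ} {j t : ℕ} {x : P} (h : j < (ℓ x : ℕ)) : φst ℓ ψ j t x = 0 := by
  rw [φst, if_neg (by omega), if_neg (by omega)]

lemma φst_supp {ψ : P → ℕ} {j t : ℕ} (x : P) (h : φst ℓ ψ j t x ≠ 0) : (ℓ x : ℕ) ≤ j := by
  by_contra hc
  push_neg at hc
  exact h (φst_gt ℓ hc)

lemma φst_succ {ψ : P → ℕ} {j t : ℕ} {x₀ : P} (hx₀ : (ℓ x₀ : ℕ) = j) :
    φst ℓ ψ j (t+1) = fun z => φst ℓ ψ j t z + if z = x₀ then 1 else 0 := by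
  funext z
  by_cases h1 : (ℓ z : ℕ) < j
  · have hne : z ≠ x₀ := by
      intro e
      subst e
      omega
    rw [φst_lt ℓ h1, φst_lt ℓ h1, if_neg hne]
    omega
  · by_cases h2 : (ℓ z : ℕ) = j
    · have he : z = x₀ := ℓ.injective (Fin.ext (by omega))
      subst he
      rw [φst_eq ℓ h2, φst_eq ℓ h2, if_pos rfl]
    · have hne : z ≠ x₀ := by
        intro e
        subst e
        omega
      rw [φst_gt ℓ (by omega), φst_gt ℓ (by omega), if_neg hne]

lemma φst_boundary {ψ : P → ℕ} {j : ℕ} {x₀ : P} (hx₀ : (ℓ x₀ : ℕ) = j) :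
    φst ℓ ψ j (ψ x₀) = φst ℓ ψ (j+1) 0 := by
  funext z
  by_cases h1 : (ℓ z : ℕ) < j
  · rw [φst_lt ℓ h1, φst_lt ℓ (by omega)]
  · by_cases h2 : (ℓ z : ℕ) = j
    · have he : z = x₀ := ℓ.injective (Fin.ext (by omega))
      subst he
      rw [φst_eq ℓ h2, φst_lt ℓ (by omega)]
    · rw [φst_gt ℓ (by omega)]
      by_cases h3 : (ℓ z : ℕ) = j + 1
      · rw [φst_eq ℓ h3]
      · rw [φst_gt ℓ (by omega)]

lemma φst_anti (hℓ : ∀ x y : P, x ≤ y → ℓ x ≤ ℓ y) {ψ : P → ℕ}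
    (hψa : ∀ ⦃x y : P⦄, x ≤ y → ψ y ≤ ψ x) {j t : ℕ}
    (hjt : ∀ z : P, (ℓ z : ℕ) = j → t ≤ ψ z) :
    ∀ ⦃x y : P⦄, x ≤ y → φst ℓ ψ j t y ≤ φst ℓ ψ j t x := by
  intro x y hxy
  have hle : (ℓ x : ℕ) ≤ (ℓ y : ℕ) := hℓ x y hxy
  by_cases hy1 : (ℓ y : ℕ) < j
  · rw [φst_lt ℓ hy1, φst_lt ℓ (by omega)]
    exact hψa hxy
  · by_cases hy2 : (ℓ y : ℕ) = j
    · rw [φst_eq ℓ hy2]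
      by_cases hx1 : (ℓ x : ℕ) < j
      · rw [φst_lt ℓ hx1]
        exact le_trans (hjt y hy2) (hψa hxy)
      · rw [φst_eq ℓ (by omega)]
    · rw [φst_gt ℓ (by omega)]
      exact Nat.zero_le _

theorem stepQ
    (hEC : ∀ x y : P, κ x = κ y → x ≤ y ∨ y ≤ x)
    (hND : ∀ x y : P, x ⋖ y → κ x ≠ κ y)
    (hℓ : ∀ x y : P, x ≤ y → ℓ x ≤ ℓ y)
    {m j t : ℕ} {ψ : P → ℕ}
    (hψa : ∀ ⦃x y : P⦄, x ≤ y → ψ y ≤ ψ x) (hψm : ∀ x, ψ x ≤ m)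
    {x₀ : P} (hx₀ : (ℓ x₀ : ℕ) = j) (ht : t < ψ x₀)
    {v : Multiset (Finset P) →₀ ℚ}
    (h0 : ∀ N, 0 ≤ v N) (hflag : 0 < v (flagOf (φst ℓ ψ j t) m))
    (hsupp : ∀ N, v N ≠ 0 → Good κ (φst ℓ ψ j t) m N) :
    (∀ N, 0 ≤ Xv κ (κ x₀) v N) ∧
      0 < Xv κ (κ x₀) v (flagOf (φst ℓ ψ j (t+1)) m) ∧
      ∀ N, Xv κ (κ x₀) v N ≠ 0 → Good κ (φst ℓ ψ j (t+1)) m N := by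
  have hφsucc : φst ℓ ψ j (t+1) = fun z => φst ℓ ψ j t z + if z = x₀ then 1 else 0 :=
    φst_succ ℓ hx₀
  have hφanti : ∀ ⦃x y : P⦄, x ≤ y → φst ℓ ψ j t y ≤ φst ℓ ψ j t x :=
    φst_anti ℓ hℓ hψa (fun z hz => by
      have he : z = x₀ := ℓ.injective (Fin.ext (by omega))
      subst he
      omega)
  have htm : t < m := lt_of_lt_of_le ht (hψm x₀)
  have hφx₀ : φst ℓ ψ j t x₀ = t := φst_eq ℓ hx₀
  have hbelow : ∀ z : P, z < x₀ → t < φst ℓ ψ j t z := by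
    intro z hz
    have h1 : (ℓ z : ℕ) < j := by
      have := strictℓ ℓ hℓ hz
      omega
    rw [φst_lt ℓ h1]
    exact lt_of_lt_of_le ht (hψa (le_of_lt hz))
  obtain ⟨hnm, hlow, hfl⟩ := flagStep (φst ℓ ψ j t) hφanti x₀ t htm hφx₀ hbelow
  set F : Finset P :=
    Finset.univ.filter (fun x : P => ((⟨t, htm⟩ : Fin m) : ℕ) < φst ℓ ψ j t x) with hF
  refine ⟨Xv_nonneg κ h0, ?_, ?_⟩
  · rw [hφsucc, hfl]
    have hFmem : F ∈ flagOf (φst ℓ ψ j t) m := by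
      rw [flagOf, Multiset.mem_coe, List.mem_ofFn]
      exact ⟨⟨t, htm⟩, rfl⟩
    have h1 : (1:ℚ) ≤ XaM κ (κ x₀) (flagOf (φst ℓ ψ j t) m)
        ((flagOf (φst ℓ ψ j t) m).erase F + {insert x₀ F}) :=
      one_le_XaM κ hFmem rfl hnm hlow
    have h2 := Xv_lower κ (κ x₀) h0 (Finsupp.mem_support_iff.mpr (ne_of_gt hflag))
      ((flagOf (φst ℓ ψ j t) m).erase F + {insert x₀ F})
    have h3 : 0 < v (flagOf (φst ℓ ψ j t) m) * XaM κ (κ x₀) (flagOf (φst ℓ ψ j t) m)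
        ((flagOf (φst ℓ ψ j t) m).erase F + {insert x₀ F}) :=
      mul_pos hflag (lt_of_lt_of_le one_pos h1)
    exact lt_of_lt_of_le h3 h2
  · intro N hN
    obtain ⟨M, hvM, hXaM⟩ := Xv_ne_zero κ hN
    obtain ⟨J, hJ, y, hκy, hyJ, hins, hNeq⟩ := XaM_ne_zero κ hXaM
    rw [hφsucc]
    exact stepGood κ ℓ hEC hND hℓ hx₀ (φst_supp ℓ) (hsupp M hvM) hJ hκy hyJ hins hNeq

theorem master
    (hEC : ∀ x y : P, κ x = κ y → x ≤ y ∨ y ≤ x)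
    (hND : ∀ x y : P, x ⋖ y → κ x ≠ κ y)
    (hℓ : ∀ x y : P, x ≤ y → ℓ x ≤ ℓ y)
    (m : ℕ) (I : Fin m → Finset P)
    (hI : ∀ j, IsLowerSet ((I j : Finset P) : Set P)) (hanti : Antitone I) :
    0 < stackVec κ ℓ m I (flagMultiset I) ∧
      ∀ M, stackVec κ ℓ m I M ≠ 0 →
        Good κ (fun x => (Finset.univ.filter (fun i : Fin m => x ∈ I i)).card) m M := by
  classical
  set ψ : P → ℕ := fun x => (Finset.univ.filter (fun i : Fin m => x ∈ I i)).card with hψdef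
  have hψm : ∀ x, ψ x ≤ m := by
    intro x
    calc (Finset.univ.filter (fun i : Fin m => x ∈ I i)).card
        ≤ (Finset.univ : Finset (Fin m)).card := Finset.card_filter_le _ _
      _ = m := by rw [Finset.card_univ, Fintype.card_fin]
  have hψa : ∀ ⦃x y : P⦄, x ≤ y → ψ y ≤ ψ x := by
    intro x y hxy
    apply Finset.card_le_card
    intro i hi
    rw [Finset.mem_filter] at hi ⊢
    exact ⟨hi.1, hI i hxy hi.2⟩
  have hmemI : ∀ (x : P) (i : Fin m), x ∈ I i ↔ (i : ℕ) < ψ x := by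
    intro x i
    constructor
    · intro h
      have hsub : Finset.Iic i ⊆ Finset.univ.filter (fun i : Fin m => x ∈ I i) := by
        intro a ha
        exact Finset.mem_filter.mpr ⟨Finset.mem_univ _, hanti (Finset.mem_Iic.mp ha) h⟩
      have hcl := Finset.card_le_card hsub
      rw [Fin.card_Iic] at hcl
      show (i : ℕ) < (Finset.univ.filter (fun i : Fin m => x ∈ I i)).card
      omega
    · intro h
      by_contra hx
      have hsub : Finset.univ.filter (fun i : Fin m => x ∈ I i) ⊆ Finset.Iio i := by
        intro a ha
        rw [Finset.mem_Iio]
        by_contra hai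
        exact hx (hanti (not_lt.mp hai) (Finset.mem_filter.mp ha).2)
      have hcl := Finset.card_le_card hsub
      rw [Fin.card_Iio] at hcl
      have h' : (i : ℕ) < (Finset.univ.filter (fun i : Fin m => x ∈ I i)).card := h
      omega
  have hflagM : flagMultiset I = flagOf ψ m := by
    have hIfun : I = fun i : Fin m => Finset.univ.filter (fun x => (i : ℕ) < ψ x) := by
      funext i
      ext x
      rw [Finset.mem_filter]
      constructor
      · intro h
        exact ⟨Finset.mem_univ _, (hmemI x i).mp h⟩
      · intro h
        exact (hmemI x i).mpr h.2
    rw [flagMultiset, flagOf]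
    rw [hIfun]
  -- fold setup
  have houter : ∀ n, n ≤ p →
      (∀ N, 0 ≤ ((List.ofFn (fun j : Fin p => (κ (ℓ.symm j), ψ (ℓ.symm j)))).take n).foldl
          (fun v pr => opPow κ pr.1 pr.2 v)
          (Finsupp.single (Multiset.replicate m (∅ : Finset P)) 1) N) ∧
      0 < ((List.ofFn (fun j : Fin p => (κ (ℓ.symm j), ψ (ℓ.symm j)))).take n).foldl
          (fun v pr => opPow κ pr.1 pr.2 v)
          (Finsupp.single (Multiset.replicate m (∅ : Finset P)) 1)
          (flagOf (φst ℓ ψ n 0) m) ∧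
      ∀ N, ((List.ofFn (fun j : Fin p => (κ (ℓ.symm j), ψ (ℓ.symm j)))).take n).foldl
          (fun v pr => opPow κ pr.1 pr.2 v)
          (Finsupp.single (Multiset.replicate m (∅ : Finset P)) 1) N ≠ 0 →
        Good κ (φst ℓ ψ n 0) m N := by
    intro n
    induction n with
    | zero =>
      intro _
      rw [List.take_zero, List.foldl_nil]
      have hrep : flagOf (φst ℓ ψ 0 0) m = Multiset.replicate m (∅ : Finset P) := by
        rw [flagOf]
        have : (fun i : Fin m => Finset.univ.filter (fun x : P => (i : ℕ) < φst ℓ ψ 0 0 x))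
            = fun _ : Fin m => (∅ : Finset P) := by
          funext i
          rw [Finset.eq_empty_iff_forall_notMem]
          intro x hx
          have h2 := (Finset.mem_filter.mp hx).2
          have h3 : φst ℓ ψ 0 0 x = 0 := by
            rw [φst]
            split_ifs <;> omega
          omega
        rw [this, List.ofFn_const]
        exact Multiset.coe_replicate m ∅
      refine ⟨?_, ?_, ?_⟩
      · intro N
        rw [Finsupp.single_apply]
        split_ifs <;> norm_num
      · rw [hrep, Finsupp.single_apply, if_pos rfl]
        norm_num
      · intro N hN
        have hNeq : N = Multiset.replicate m (∅ : Finset P) := by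
          by_contra hc
          rw [Finsupp.single_apply, if_neg (fun e => hc e.symm)] at hN
          exact hN rfl
        subst hNeq
        refine ⟨Multiset.card_replicate _ _, ?_, ?_, ?_⟩
        · intro J hJ
          rw [Multiset.eq_of_mem_replicate hJ]
          intro a b _ hb
          simp at hb
        · have h1 : Multiset.map Finset.card (Multiset.replicate m (∅ : Finset P))
              = Multiset.replicate m 0 := by
            rw [Multiset.map_replicate]
            simp
          rw [h1, Multiset.sum_replicate]
          have h2 : ∀ x : P, φst ℓ ψ 0 0 x = 0 := by
            intro x
            rw [φst]
            split_ifs <;> omega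
          rw [Finset.sum_congr rfl (fun x _ => h2 x)]
          simp
        · intro x
          have hcnt0 : ∀ z : P, cnt (Multiset.replicate m (∅ : Finset P)) z = 0 := by
            intro z
            rw [cnt, Multiset.countP_eq_zero]
            intro J hJ
            rw [Multiset.eq_of_mem_replicate hJ]
            simp
          rw [Finset.sum_congr rfl (fun z _ => hcnt0 z)]
          simp
    | succ n ihn =>
      intro hn
      have hnp : n < p := hn
      obtain ⟨ih0, ihflag, ihsupp⟩ := ihn (le_of_lt hnp)
      have hx₀ : (ℓ (ℓ.symm ⟨n, hnp⟩) : ℕ) = n := by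
        rw [Equiv.apply_symm_apply]
      have htake : (List.ofFn (fun j : Fin p => (κ (ℓ.symm j), ψ (ℓ.symm j)))).take (n+1)
          = (List.ofFn (fun j : Fin p => (κ (ℓ.symm j), ψ (ℓ.symm j)))).take n
            ++ [(κ (ℓ.symm ⟨n, hnp⟩), ψ (ℓ.symm ⟨n, hnp⟩))] := by
        have h1 : (List.ofFn (fun j : Fin p => (κ (ℓ.symm j), ψ (ℓ.symm j))))[n]?
            = some (κ (ℓ.symm ⟨n, hnp⟩), ψ (ℓ.symm ⟨n, hnp⟩)) := by
          rw [List.getElem?_eq_getElem (by simpa using hnp)]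
          simp
        rw [List.take_succ, h1]
        rfl
      rw [htake, List.foldl_append, List.foldl_cons, List.foldl_nil]
      have hinner : ∀ t, t ≤ ψ (ℓ.symm ⟨n, hnp⟩) →
          (∀ N, 0 ≤ (Xv κ (κ (ℓ.symm ⟨n, hnp⟩)))^[t]
              (((List.ofFn (fun j : Fin p => (κ (ℓ.symm j), ψ (ℓ.symm j)))).take n).foldl
                (fun v pr => opPow κ pr.1 pr.2 v)
                (Finsupp.single (Multiset.replicate m (∅ : Finset P)) 1)) N) ∧
          0 < (Xv κ (κ (ℓ.symm ⟨n, hnp⟩)))^[t]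
              (((List.ofFn (fun j : Fin p => (κ (ℓ.symm j), ψ (ℓ.symm j)))).take n).foldl
                (fun v pr => opPow κ pr.1 pr.2 v)
                (Finsupp.single (Multiset.replicate m (∅ : Finset P)) 1))
              (flagOf (φst ℓ ψ n t) m) ∧
          ∀ N, (Xv κ (κ (ℓ.symm ⟨n, hnp⟩)))^[t]
              (((List.ofFn (fun j : Fin p => (κ (ℓ.symm j), ψ (ℓ.symm j)))).take n).foldl
                (fun v pr => opPow κ pr.1 pr.2 v)
                (Finsupp.single (Multiset.replicate m (∅ : Finset P)) 1)) N ≠ 0 →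
            Good κ (φst ℓ ψ n t) m N := by
        intro t
        induction t with
        | zero =>
          intro _
          rw [Function.iterate_zero_apply]
          exact ⟨ih0, ihflag, ihsupp⟩
        | succ t iht =>
          intro htle
          obtain ⟨a0, aflag, asupp⟩ := iht (by omega)
          have hstep := stepQ ℓ κ hEC hND hℓ hψa hψm hx₀ (by omega) a0 aflag asupp
          rw [Function.iterate_succ_apply']
          exact hstep
      obtain ⟨b0, bflag, bsupp⟩ := hinner (ψ (ℓ.symm ⟨n, hnp⟩)) le_rfl
      have hboundary : φst ℓ ψ n (ψ (ℓ.symm ⟨n, hnp⟩)) = φst ℓ ψ (n+1) 0 :=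
        φst_boundary ℓ hx₀
      have hcpos : (0:ℚ) < (((ψ (ℓ.symm ⟨n, hnp⟩)).factorial : ℚ))⁻¹ := by
        apply inv_pos.mpr
        exact_mod_cast Nat.factorial_pos _
      refine ⟨?_, ?_, ?_⟩
      · intro N
        rw [opPow, Finsupp.smul_apply, smul_eq_mul]
        exact mul_nonneg (le_of_lt hcpos) (b0 N)
      · rw [opPow, Finsupp.smul_apply, smul_eq_mul, ← hboundary]
        exact mul_pos hcpos bflag
      · intro N hN
        rw [opPow, Finsupp.smul_apply, smul_eq_mul] at hN
        rw [← hboundary]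
        exact bsupp N (mul_ne_zero_iff.mp hN).2
  obtain ⟨c0, cflag, csupp⟩ := houter p le_rfl
  have htakep : (List.ofFn (fun j : Fin p => (κ (ℓ.symm j), ψ (ℓ.symm j)))).take p
      = List.ofFn (fun j : Fin p => (κ (ℓ.symm j), ψ (ℓ.symm j))) := by
    apply List.take_of_length_le
    rw [List.length_ofFn]
  have hfinal : φst ℓ ψ p 0 = ψ := by
    funext x
    rw [φst_lt ℓ (ℓ x).isLt]
  rw [htakep] at cflag csupp
  rw [hfinal] at cflag csupp
  have hstack : stackVec κ ℓ m I
      = (List.ofFn (fun j : Fin p => (κ (ℓ.symm j), ψ (ℓ.symm j)))).foldl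
          (fun v pr => opPow κ pr.1 pr.2 v)
          (Finsupp.single (Multiset.replicate m (∅ : Finset P)) 1) := rfl
  constructor
  · rw [hstack, hflagM]
    exact cflag
  · intro M hM
    rw [hstack] at hM
    exact csupp M hM

lemma flag_inj {m : ℕ} {I I' : Fin m → Finset P} (h1 : Antitone I) (h2 : Antitone I')
    (h : flagMultiset I = flagMultiset I') : I = I' := by
  haveI : IsAntisymm (Finset P) (fun A B : Finset P => B ⊆ A) :=
    ⟨fun a b hab hba => Finset.Subset.antisymm hba hab⟩
  have hperm : List.Perm (List.ofFn I) (List.ofFn I') := Multiset.coe_eq_coe.mp h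
  have hs1 : (List.ofFn I).Pairwise (fun A B : Finset P => B ⊆ A) :=
    List.pairwise_ofFn.mpr (fun i j hij => h1 (le_of_lt hij))
  have hs2 : (List.ofFn I').Pairwise (fun A B : Finset P => B ⊆ A) :=
    List.pairwise_ofFn.mpr (fun i j hij => h2 (le_of_lt hij))
  exact List.ofFn_injective (List.Perm.eq_of_pairwise (fun a b _ _ hab hba => Finset.Subset.antisymm hba hab) hs1 hs2 hperm)

noncomputable def KM (M : Multiset (Finset P)) : ℕᵒᵈ ×ₗ List (ℕ ×ₗ List (Fin p)) :=
  toLex (OrderDual.toDual ((M.map Finset.card).sum), sortKeys ℓ M)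

lemma gravity_KM {M N : Multiset (Finset P)} (h : gravityM ℓ M N) : KM ℓ M < KM ℓ N := by
  rw [KM, KM, Prod.Lex.lt_iff]
  rcases h with h | ⟨h1, h2⟩
  · left
    exact OrderDual.toDual_lt_toDual.mpr h
  · right
    exact ⟨congrArg OrderDual.toDual h1, h2⟩

end Stmt12Aux

/-- Lemma 4.4 and Proposition 4.6: over a finite `Γ`-colored poset satisfying EC and
ND, with a fixed linear extension and `m ≥ 1`: each `m`-stackwise vector has the
multiset of its `m`-flag as its unique gravity-minimal (leading) term, distinct
`m`-flags have distinct leading terms, and the `m`-stackwise vectors are linearly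
independent. -/
theorem stmt12 (P Γ : Type) [Fintype P] [PartialOrder P] [DecidableEq P] [Nonempty P]
    (κ : P → Γ) (hsurj : Function.Surjective κ)
    (hEC : ∀ x y : P, κ x = κ y → x ≤ y ∨ y ≤ x)
    (hND : ∀ x y : P, x ⋖ y → κ x ≠ κ y)
    (p : ℕ) (ℓ : P ≃ Fin p) (hℓ : ∀ x y : P, x ≤ y → ℓ x ≤ ℓ y)
    (m : ℕ) (hm : 1 ≤ m) :
    (∀ I : Fin m → Finset P, (∀ j, IsLowerSet (↑(I j) : Set P)) → Antitone I →
      flagMultiset I ∈ (stackVec κ ℓ m I).support ∧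
      ∀ M ∈ (stackVec κ ℓ m I).support, M ≠ flagMultiset I → gravityM ℓ (flagMultiset I) M) ∧
    (∀ I I' : Fin m → Finset P,
      (∀ j, IsLowerSet (↑(I j) : Set P)) → Antitone I →
      (∀ j, IsLowerSet (↑(I' j) : Set P)) → Antitone I' →
      I ≠ I' → flagMultiset I ≠ flagMultiset I') ∧
    LinearIndependent ℚ
      (fun F : {I : Fin m → Finset P // (∀ j, IsLowerSet (↑(I j) : Set P)) ∧ Antitone I} =>
        stackVec κ ℓ m F.1) := by
  classical
  open Stmt12Aux in
  -- part 1 packaged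
  have part1 : ∀ I : Fin m → Finset P, (∀ j, IsLowerSet (↑(I j) : Set P)) → Antitone I →
      flagMultiset I ∈ (stackVec κ ℓ m I).support ∧
      ∀ M ∈ (stackVec κ ℓ m I).support, M ≠ flagMultiset I →
        gravityM ℓ (flagMultiset I) M := by
    intro I hI hanti
    obtain ⟨hpos, hsupp⟩ := Stmt12Aux.master ℓ κ hEC hND hℓ m I hI hanti
    have hψa : ∀ ⦃x y : P⦄, x ≤ y →
        (fun x => (Finset.univ.filter (fun i : Fin m => x ∈ I i)).card) y
          ≤ (fun x => (Finset.univ.filter (fun i : Fin m => x ∈ I i)).card) x := by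
      intro x y hxy
      apply Finset.card_le_card
      intro i hi
      rw [Finset.mem_filter] at hi ⊢
      exact ⟨hi.1, hI i hxy hi.2⟩
    have hflagmem : flagMultiset I ∈ (stackVec κ ℓ m I).support :=
      Finsupp.mem_support_iff.mpr (ne_of_gt hpos)
    refine ⟨hflagmem, ?_⟩
    intro M hM hne
    have hGoodM := hsupp M (Finsupp.mem_support_iff.mp hM)
    have hGoodF := hsupp (flagMultiset I) (ne_of_gt hpos)
    obtain ⟨hcard, _, hsum, hdom⟩ := hGoodM
    obtain ⟨_, _, hsumF, _⟩ := hGoodF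
    have hstat := Stmt12Aux.staticMin ℓ κ m
      (fun x => (Finset.univ.filter (fun i : Fin m => x ∈ I i)).card) hψa M hcard hdom
    have hflagOf : flagMultiset I
        = Stmt12Aux.flagOf (fun x => (Finset.univ.filter (fun i : Fin m => x ∈ I i)).card) m := by
      -- same computation as in master
      have hmemI : ∀ (x : P) (i : Fin m), x ∈ I i ↔
          (i : ℕ) < (Finset.univ.filter (fun i : Fin m => x ∈ I i)).card := by
        intro x i
        constructor
        · intro h
          have hsub : Finset.Iic i ⊆ Finset.univ.filter (fun i : Fin m => x ∈ I i) := by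
            intro a ha
            exact Finset.mem_filter.mpr ⟨Finset.mem_univ _, hanti (Finset.mem_Iic.mp ha) h⟩
          have hcl := Finset.card_le_card hsub
          rw [Fin.card_Iic] at hcl
          omega
        · intro h
          by_contra hx
          have hsub : Finset.univ.filter (fun i : Fin m => x ∈ I i) ⊆ Finset.Iio i := by
            intro a ha
            rw [Finset.mem_Iio]
            by_contra hai
            exact hx (hanti (not_lt.mp hai) (Finset.mem_filter.mp ha).2)
          have hcl := Finset.card_le_card hsub
          rw [Fin.card_Iio] at hcl
          omega
      have hIfun : I = fun i : Fin m => Finset.univ.filter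
          (fun x => (i : ℕ) < (Finset.univ.filter (fun i : Fin m => x ∈ I i)).card) := by
        funext i
        ext x
        rw [Finset.mem_filter]
        constructor
        · intro h
          exact ⟨Finset.mem_univ _, (hmemI x i).mp h⟩
        · intro h
          exact (hmemI x i).mpr h.2
      rw [flagMultiset, Stmt12Aux.flagOf]
      conv_lhs => rw [hIfun]
    rcases hstat with heq | hlex
    · exact absurd (heq.trans hflagOf.symm) hne
    · right
      refine ⟨hsumF.trans hsum.symm, ?_⟩
      rw [hflagOf]
      exact hlex
  have part2 : ∀ I I' : Fin m → Finset P,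
      (∀ j, IsLowerSet (↑(I j) : Set P)) → Antitone I →
      (∀ j, IsLowerSet (↑(I' j) : Set P)) → Antitone I' →
      I ≠ I' → flagMultiset I ≠ flagMultiset I' := by
    intro I I' _ h1 _ h2 hne h
    exact hne (Stmt12Aux.flag_inj h1 h2 h)
  refine ⟨part1, part2, ?_⟩
  -- linear independence
  rw [linearIndependent_iff]
  intro l hl
  by_contra hlne
  have hne : l.support.Nonempty := Finsupp.support_nonempty_iff.mpr hlne
  obtain ⟨F₀, hF₀, hmin⟩ := Finset.exists_min_image l.support
    (fun F => Stmt12Aux.KM ℓ (flagMultiset F.1)) hne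
  set t₀ := flagMultiset F₀.1 with ht₀
  rw [Finsupp.linearCombination_apply] at hl
  have happ : (l.sum fun F c => c • stackVec κ ℓ m F.1) t₀ = 0 := by rw [hl]; rfl
  rw [Finsupp.sum_apply, Finsupp.sum] at happ
  simp only [Finsupp.smul_apply, smul_eq_mul] at happ
  have hsingle : ∑ F ∈ l.support, l F * stackVec κ ℓ m F.1 t₀
      = l F₀ * stackVec κ ℓ m F₀.1 t₀ := by
    apply Finset.sum_eq_single F₀
    · intro G hG hGne
      have hzero : stackVec κ ℓ m G.1 t₀ = 0 := by
        by_contra hc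
        have hmem : t₀ ∈ (stackVec κ ℓ m G.1).support := Finsupp.mem_support_iff.mpr hc
        by_cases heq : t₀ = flagMultiset G.1
        · have : G.1 = F₀.1 := Stmt12Aux.flag_inj G.2.2 F₀.2.2 (heq.symm.trans ht₀)
          exact hGne (Subtype.ext this)
        · have hgr := (part1 G.1 G.2.1 G.2.2).2 t₀ hmem heq
          have hlt := Stmt12Aux.gravity_KM ℓ hgr
          exact absurd (hmin G hG) (not_le_of_gt hlt)
      rw [hzero, mul_zero]
    · intro hcon
      exact absurd hF₀ hcon
  rw [hsingle] at happ
  have hval : stackVec κ ℓ m F₀.1 t₀ ≠ 0 :=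
    Finsupp.mem_support_iff.mp (part1 F₀.1 F₀.2.1 F₀.2.2).1
  have : l F₀ = 0 := by
    rcases mul_eq_zero.mp happ with h | h
    · exact h
    · exact absurd h hval
  exact Finsupp.mem_support_iff.mp hF₀ this
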